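/- arXiv:1903.00939 — 5 statements merged into one kernel-verified Lean document; each statement's English description precedes it below -/
import Mathlib

section
/- Consider the Bernoulli race algorithm with positive constants c_1,...,c_N and probabilities b_1,...,b_N in [0,1] with at least one b_i c_i > 0: repeatedly sample an index I from the multinomial distribution P(I=i) = c_i / (sum_k c_k), then sample Z ~ Bernoulli(b_I), returning I when Z = 1. The returned index has distribution p(i) = c_i b_i / (sum_{k=1}^N c_k b_k). -/
open MeasureTheory ProbabilityTheory

/-- Bernoulli race output distribution: conditionally on acceptance, the
returned index `i` has probability `c i * b i / ∑ k, c k * b k`. -/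
theorem bernoulli_race_output {Ω : Type*} [MeasurableSpace Ω]
    (μ : Measure Ω) [IsProbabilityMeasure μ]
    (N : ℕ) (hN : 0 < N) (c b : Fin N → ℝ)
    (hc : ∀ i, 0 < c i) (hb : ∀ i, b i ∈ Set.Icc (0:ℝ) 1)
    (hpos : 0 < ∑ k, c k * b k)
    (I : Ω → Fin N) (Z : Ω → Bool)
    (hI : Measurable I) (hZ : Measurable Z)
    (hjoint : ∀ i, μ {ω | I ω = i ∧ Z ω = true}
      = ENNReal.ofReal ((c i / ∑ k, c k) * b i)) :
    ∀ i, μ[|{ω | Z ω = true}] {ω | I ω = i}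
      = ENNReal.ofReal (c i * b i / ∑ k, c k * b k) := by
  set C : ℝ := ∑ k, c k with hC
  have hCpos : 0 < C := Finset.sum_pos (fun i _ => hc i) ⟨⟨0, hN⟩, Finset.mem_univ _⟩
  set S : ℝ := ∑ k, c k * b k with hS
  -- measure of {Z = true}
  have hZset : {ω | Z ω = true} = ⋃ i, {ω | I ω = i ∧ Z ω = true} := by
    ext ω; simp [Set.mem_iUnion]
  have hmeas : ∀ i : Fin N, MeasurableSet {ω | I ω = i ∧ Z ω = true} := by
    intro i
    exact (hI (measurableSet_singleton i)).inter (hZ (measurableSet_singleton true))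
  have hdisj : Pairwise (Function.onFun Disjoint
      (fun i => {ω | I ω = i ∧ Z ω = true})) := by
    intro i j hij
    refine Set.disjoint_left.2 ?_
    rintro ω ⟨hi, _⟩ ⟨hj, _⟩
    exact hij (hi ▸ hj ▸ rfl)
  have hZmeas : μ {ω | Z ω = true} = ENNReal.ofReal (S / C) := by
    rw [hZset, measure_iUnion hdisj hmeas]
    simp_rw [hjoint]
    rw [tsum_fintype]
    rw [← ENNReal.ofReal_sum_of_nonneg (fun i _ =>
      mul_nonneg (div_nonneg (hc i).le hCpos.le) (hb i).1)]
    congr 1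
    rw [Finset.sum_div]
    exact Finset.sum_congr rfl (fun i _ => by ring)
  intro i
  have hsm : MeasurableSet {ω | Z ω = true} := hZ (measurableSet_singleton true)
  rw [ProbabilityTheory.cond_apply hsm, hZmeas]
  have hinter : {ω | Z ω = true} ∩ {ω | I ω = i} = {ω | I ω = i ∧ Z ω = true} := by
    ext ω; simp [and_comm]
  rw [hinter, hjoint]
  rw [← ENNReal.ofReal_inv_of_pos (by positivity)]
  rw [← ENNReal.ofReal_mul (by positivity)]
  congr 1
  field_simp
end

section
/- Let φ: [0,Δ] → ℝ be a measurable function with 0 ≤ c - φ(w) ≤ λ for all w (given constants c ∈ ℝ, λ > 0). Let κ ~ Poisson(λΔ), let U_1, U_2, ... be i.i.d. Uniform[0,Δ], all independent. Then the estimator P̂ = exp((λ - c)Δ) · prod_{i=1}^{κ} (c - φ(U_i))/λ satisfies E[P̂] = exp(-∫_0^Δ φ(s) ds). -/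
open MeasureTheory ProbabilityTheory
open scoped ENNReal

lemma lintegral_finset_prod_of_iIndepFun' {ι Ω : Type*} [MeasurableSpace Ω] {μ : Measure Ω}
    [IsProbabilityMeasure μ] {f : ι → Ω → ℝ≥0∞} (hm : ∀ i, Measurable (f i))
    (h : iIndepFun (m := fun _ => inferInstance) f μ) (s : Finset ι) :
    ∫⁻ ω, ∏ i ∈ s, f i ω ∂μ = ∏ i ∈ s, ∫⁻ ω, f i ω ∂μ := by
  classical
  induction s using Finset.cons_induction with
  | empty => simp
  | cons a s ha ih =>
    have hPm : Measurable (∏ j ∈ s, f j) := by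
      rw [Finset.prod_fn]
      exact Finset.measurable_prod s fun i _ => hm i
    have hip : IndepFun (∏ j ∈ s, f j) (f a) μ :=
      h.indepFun_finset_prod_of_notMem hm ha
    have key := lintegral_mul_eq_lintegral_mul_lintegral_of_indepFun hPm (hm a) hip
    simp only [Finset.prod_cons, Pi.mul_apply, Finset.prod_fn, Finset.prod_apply] at key ⊢
    calc ∫⁻ ω, f a ω * ∏ i ∈ s, f i ω ∂μ
        = ∫⁻ ω, (∏ i ∈ s, f i ω) * f a ω ∂μ := by simp_rw [mul_comm]
      _ = (∫⁻ ω, ∏ i ∈ s, f i ω ∂μ) * ∫⁻ ω, f a ω ∂μ := key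
      _ = _ := by rw [ih]; ring

/-- Unbiasedness of the Poisson estimator:
`E[exp((λ-c)Δ) ∏_{i<κ} (c - φ(U_i))/λ] = exp(-∫₀^Δ φ(s) ds)`. -/
theorem poisson_estimator_unbiased {Ω : Type*} [MeasurableSpace Ω]
    (μ : Measure Ω) [IsProbabilityMeasure μ]
    (Δ lam c : ℝ) (hΔ : 0 < Δ) (hlam : 0 < lam)
    (φ : ℝ → ℝ) (hφm : Measurable φ)
    (hφ : ∀ w ∈ Set.Icc (0:ℝ) Δ, c - φ w ∈ Set.Icc (0:ℝ) lam)
    (κ : Ω → ℕ) (U : ℕ → Ω → ℝ)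
    (hκm : Measurable κ) (hUm : ∀ i, Measurable (U i))
    (hκ : ∀ k : ℕ, μ {ω | κ ω = k}
      = ENNReal.ofReal (Real.exp (-(lam * Δ)) * (lam * Δ) ^ k / Nat.factorial k))
    (hU : ∀ i, μ.map (U i) = (ENNReal.ofReal Δ)⁻¹ • volume.restrict (Set.Icc (0:ℝ) Δ))
    (hindep : iIndepFun (m := fun _ => inferInstance)
      (fun o : Option ℕ => o.elim (fun ω => (κ ω : ℝ)) U) μ) :
    ∫ ω, Real.exp ((lam - c) * Δ) * ∏ i ∈ Finset.range (κ ω), (c - φ (U i ω)) / lam ∂μ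
      = Real.exp (-∫ s in (0:ℝ)..Δ, φ s) := by
  classical
  set a : ℝ := Real.exp ((lam - c) * Δ) with ha
  have ha0 : 0 ≤ a := (Real.exp_pos _).le
  set ψ : ℝ → ℝ := fun w => if w ∈ Set.Icc (0:ℝ) Δ then (c - φ w) / lam else 0 with hψdef
  have hψm : Measurable ψ :=
    Measurable.ite measurableSet_Icc ((measurable_const.sub hφm).div_const lam) measurable_const
  have hψ0 : ∀ w, 0 ≤ ψ w := by
    intro w
    rw [hψdef]
    dsimp only
    split_ifs with h
    · exact div_nonneg (hφ w h).1 hlam.le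
    · exact le_refl 0
  -- a.e. all U i land in Icc
  have hUae : ∀ᵐ ω ∂μ, ∀ i, U i ω ∈ Set.Icc (0:ℝ) Δ := by
    rw [MeasureTheory.ae_all_iff]
    intro i
    rw [ae_iff]
    have : {ω | ¬ U i ω ∈ Set.Icc (0:ℝ) Δ} = U i ⁻¹' (Set.Icc (0:ℝ) Δ)ᶜ := rfl
    rw [this, ← Measure.map_apply (hUm i) measurableSet_Icc.compl, hU i]
    simp [Measure.restrict_apply measurableSet_Icc.compl]
  -- ENNReal versions
  set g : ℝ → ℝ≥0∞ := fun w => ENNReal.ofReal (ψ w) with hgdef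
  have hgm : Measurable g := hψm.ennreal_ofReal
  set F : Ω → ℝ≥0∞ := fun ω => ENNReal.ofReal a * ∏ i ∈ Finset.range (κ ω), g (U i ω) with hFdef
  set T : ℕ → Ω → ℝ≥0∞ := fun k ω =>
    ({ω | κ ω = k} : Set Ω).indicator
      (fun ω => ENNReal.ofReal a * ∏ i ∈ Finset.range k, g (U i ω)) ω with hTdef
  have hAk : ∀ k : ℕ, MeasurableSet {ω | κ ω = k} := fun k =>
    hκm (measurableSet_singleton k)
  have hprodm : ∀ k : ℕ, Measurable fun ω => ∏ i ∈ Finset.range k, g (U i ω) :=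
    fun k => Finset.measurable_prod _ fun i _ => hgm.comp (hUm i)
  have hTm : ∀ k, Measurable (T k) := fun k =>
    ((measurable_const.mul (hprodm k))).indicator (hAk k)
  have hFsum : ∀ ω, F ω = ∑' k, T k ω := by
    intro ω
    rw [tsum_eq_single (κ ω)]
    · exact (Set.indicator_of_mem (show ω ∈ {ω' | κ ω' = κ ω} from rfl) _).symm
    · intro b hb
      exact Set.indicator_of_notMem (fun h => hb (by exact h.symm ▸ rfl)) _
  -- the uniform mean
  set m' : ℝ≥0∞ := (ENNReal.ofReal Δ)⁻¹ * ∫⁻ x in Set.Icc (0:ℝ) Δ, g x with hm'def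
  have hgU : ∀ i, ∫⁻ ω, g (U i ω) ∂μ = m' := by
    intro i
    rw [← lintegral_map hgm (hUm i), hU i]
    simp [lintegral_smul_measure, hm'def]
  -- per-k integral via independence
  have hTk : ∀ k, ∫⁻ ω, T k ω ∂μ = ENNReal.ofReal a * (μ {ω | κ ω = k} * m' ^ k) := by
    intro k
    set G : Option ℕ → ℝ → ℝ≥0∞ := fun o =>
      o.elim (({((k : ℕ) : ℝ)} : Set ℝ).indicator (fun _ => (1:ℝ≥0∞))) (fun _ => g) with hGdef
    have hGm : ∀ o, Measurable (G o) := by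
      rintro (_ | i)
      · exact (measurable_const.indicator (measurableSet_singleton _))
      · exact hgm
    set Y : Option ℕ → Ω → ℝ≥0∞ :=
      fun o => G o ∘ (fun o' : Option ℕ => o'.elim (fun ω => (κ ω : ℝ)) U) o with hYdef
    have hXm : ∀ o : Option ℕ,
        Measurable ((fun o' : Option ℕ => o'.elim (fun ω => (κ ω : ℝ)) U) o) := by
      rintro (_ | i)
      · exact (measurable_from_nat (f := fun n : ℕ => (n:ℝ))).comp hκm
      · exact hUm i
    have hYm : ∀ o, Measurable (Y o) := fun o => (hGm o).comp (hXm o)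
    have hYindep : iIndepFun (m := fun _ => inferInstance) Y μ := hindep.comp G hGm
    have hYnone : ∀ ω, Y none ω = ({ω | κ ω = k} : Set Ω).indicator (fun _ => (1:ℝ≥0∞)) ω := by
      intro ω
      by_cases h : κ ω = k
      · have h' : ((κ ω : ℝ)) ∈ ({((k:ℕ):ℝ)} : Set ℝ) := by simp [h]
        simp only [hYdef, hGdef, Function.comp_apply, Option.elim]
        rw [Set.indicator_of_mem h', Set.indicator_of_mem (by exact h : ω ∈ {ω | κ ω = k})]
      · have h' : ((κ ω : ℝ)) ∉ ({((k:ℕ):ℝ)} : Set ℝ) := by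
          simp only [Set.mem_singleton_iff, Nat.cast_inj]; exact h
        simp only [hYdef, hGdef, Function.comp_apply, Option.elim]
        rw [Set.indicator_of_notMem h', Set.indicator_of_notMem (by exact h : ω ∉ {ω | κ ω = k})]
    have hYsome : ∀ i ω, Y (some i) ω = g (U i ω) := fun i ω => rfl
    have hT_eq : ∀ ω, T k ω
        = ENNReal.ofReal a * (Y none ω * ∏ i ∈ Finset.range k, Y (some i) ω) := by
      intro ω
      rw [hYnone]
      by_cases h : κ ω = k
      · rw [hTdef]
        simp only []
        rw [Set.indicator_of_mem (by exact h : ω ∈ {ω | κ ω = k}),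
          Set.indicator_of_mem (by exact h : ω ∈ {ω | κ ω = k})]
        simp [hYsome]
      · rw [hTdef]
        simp only []
        rw [Set.indicator_of_notMem (by exact h : ω ∉ {ω | κ ω = k}),
          Set.indicator_of_notMem (by exact h : ω ∉ {ω | κ ω = k})]
        simp
    have hs : (none : Option ℕ) ∉ (Finset.range k).map ⟨some, Option.some_injective ℕ⟩ := by simp
    have hip : IndepFun (∏ j ∈ (Finset.range k).map ⟨some, Option.some_injective ℕ⟩, Y j)
        (Y none) μ := hYindep.indepFun_finset_prod_of_notMem hYm hs
    have hPm' : Measurable (∏ j ∈ (Finset.range k).map ⟨some, Option.some_injective ℕ⟩, Y j) := by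
      rw [Finset.prod_fn]
      exact Finset.measurable_prod _ fun i _ => hYm i
    have key := lintegral_mul_eq_lintegral_mul_lintegral_of_indepFun hPm' (hYm none) hip
    have haux := lintegral_finset_prod_of_iIndepFun' hYm hYindep
      ((Finset.range k).map ⟨some, Option.some_injective ℕ⟩)
    have hYnoneint : ∫⁻ ω, Y none ω ∂μ = μ {ω | κ ω = k} := by
      rw [lintegral_congr hYnone]
      exact lintegral_indicator_one (hAk k)
    have hPmm : Measurable fun ω => Y none ω * ∏ i ∈ Finset.range k, Y (some i) ω :=
      (hYm none).mul (Finset.measurable_prod _ fun i _ => hYm (some i))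
    calc ∫⁻ ω, T k ω ∂μ
        = ∫⁻ ω, ENNReal.ofReal a * (Y none ω * ∏ i ∈ Finset.range k, Y (some i) ω) ∂μ :=
          lintegral_congr hT_eq
      _ = ENNReal.ofReal a * ∫⁻ ω, Y none ω * ∏ i ∈ Finset.range k, Y (some i) ω ∂μ :=
          lintegral_const_mul _ hPmm
      _ = ENNReal.ofReal a * (μ {ω | κ ω = k} * m' ^ k) := by
          congr 1
          have e1 : ∀ ω : Ω, Y none ω * ∏ i ∈ Finset.range k, Y (some i) ω
              = ((∏ j ∈ (Finset.range k).map ⟨some, Option.some_injective ℕ⟩, Y j) * Y none) ω := by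
            intro ω
            simp only [Pi.mul_apply, Finset.prod_apply, Finset.prod_map,
              Function.Embedding.coeFn_mk]
            ring
          rw [lintegral_congr e1, key]
          simp only [Finset.prod_apply]
          rw [haux]
          rw [Finset.prod_map]
          simp only [Function.Embedding.coeFn_mk]
          have : ∀ i : ℕ, ∫⁻ ω, Y (some i) ω ∂μ = m' := fun i => hgU i
          simp_rw [this, hYnoneint, Finset.prod_const, Finset.card_range]
          ring
  -- integrability of the truncated density
  have hnnIcc : ∀ᵐ x ∂(volume.restrict (Set.Icc (0:ℝ) Δ)), 0 ≤ (c - φ x) / lam :=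
    (ae_restrict_iff' measurableSet_Icc).2
      (ae_of_all _ fun x hx => div_nonneg (hφ x hx).1 hlam.le)
  have hint : IntegrableOn (fun x => (c - φ x) / lam) (Set.Icc (0:ℝ) Δ) volume := by
    refine Integrable.mono' (integrable_const 1)
      ((measurable_const.sub hφm).div_const lam).aestronglyMeasurable ?_
    refine (ae_restrict_iff' measurableSet_Icc).2 (ae_of_all _ fun x hx => ?_)
    rw [Real.norm_eq_abs, abs_of_nonneg (div_nonneg (hφ x hx).1 hlam.le)]
    exact (div_le_one hlam).2 (hφ x hx).2
  set J : ℝ := ∫ x in Set.Icc (0:ℝ) Δ, (c - φ x) / lam with hJdef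
  have hJ0 : 0 ≤ J := integral_nonneg_of_ae hnnIcc
  have hm'val : m' = ENNReal.ofReal (J / Δ) := by
    rw [hm'def]
    have h1 : ∫⁻ x in Set.Icc (0:ℝ) Δ, g x = ENNReal.ofReal J := by
      rw [hJdef, ofReal_integral_eq_lintegral_ofReal hint hnnIcc]
      refine setLIntegral_congr_fun measurableSet_Icc (fun x hx => ?_)
      rw [hgdef]; dsimp only; rw [hψdef]; dsimp only; rw [if_pos hx]
    rw [h1, ENNReal.ofReal_div_of_pos hΔ, ENNReal.div_eq_inv_mul]
  set mv : ℝ := J / Δ with hmvdef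
  have hmv0 : 0 ≤ mv := div_nonneg hJ0 hΔ.le
  -- integrability of φ on Icc
  have hφint : IntegrableOn φ (Set.Icc (0:ℝ) Δ) volume := by
    have h2 : IntegrableOn (fun x => lam * ((c - φ x) / lam)) (Set.Icc (0:ℝ) Δ) volume :=
      hint.const_mul lam
    have h3 : IntegrableOn (fun x => c - φ x) (Set.Icc (0:ℝ) Δ) volume := by
      refine h2.congr_fun (fun x _ => ?_) measurableSet_Icc
      field_simp
    have h4 : IntegrableOn (fun x => c - (c - φ x)) (Set.Icc (0:ℝ) Δ) volume :=
      (integrableOn_const measure_Icc_lt_top.ne).sub h3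
    refine h4.congr_fun (fun x _ => by ring) measurableSet_Icc
  have hJval : lam * J = c * Δ - ∫ x in Set.Icc (0:ℝ) Δ, φ x := by
    rw [hJdef, ← integral_const_mul]
    have e : ∀ x : ℝ, lam * ((c - φ x) / lam) = c - φ x := fun x => by field_simp
    simp_rw [e]
    rw [integral_sub (integrableOn_const measure_Icc_lt_top.ne : IntegrableOn (fun _ => c) (Set.Icc (0:ℝ) Δ) volume) hφint,
      setIntegral_const, measureReal_def, Real.volume_Icc]
    rw [ENNReal.toReal_ofReal (by linarith)]
    rw [smul_eq_mul]
    ring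
  have hII : ∫ s in (0:ℝ)..Δ, φ s = ∫ x in Set.Icc (0:ℝ) Δ, φ x := by
    rw [intervalIntegral.integral_of_le hΔ.le, ← integral_Icc_eq_integral_Ioc]
  -- main lintegral computation
  have hexp : (∑' k : ℕ, (lam * Δ * mv) ^ k / (Nat.factorial k : ℝ))
      = Real.exp (lam * Δ * mv) := by
    rw [Real.exp_eq_exp_ℝ, NormedSpace.exp_eq_tsum_div]
  have hmain : ∫⁻ ω, F ω ∂μ
      = ENNReal.ofReal (Real.exp ((lam - c) * Δ + -(lam * Δ) + lam * Δ * mv)) := by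
    rw [lintegral_congr hFsum, lintegral_tsum (fun k => (hTm k).aemeasurable)]
    have hterm : ∀ k : ℕ, ∫⁻ ω, T k ω ∂μ
        = ENNReal.ofReal ((a * Real.exp (-(lam * Δ))) * ((lam * Δ * mv) ^ k / Nat.factorial k)) := by
      intro k
      rw [hTk k, hκ k, hm'val, ← ENNReal.ofReal_pow hmv0,
        ← ENNReal.ofReal_mul (by positivity), ← ENNReal.ofReal_mul ha0]
      congr 1
      rw [mul_pow]
      ring
    simp_rw [hterm]
    have hsum : Summable fun k : ℕ =>
        (a * Real.exp (-(lam * Δ))) * ((lam * Δ * mv) ^ k / Nat.factorial k) :=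
      (Real.summable_pow_div_factorial (lam * Δ * mv)).mul_left _
    have hnn : ∀ k : ℕ, 0 ≤ (a * Real.exp (-(lam * Δ))) * ((lam * Δ * mv) ^ k / Nat.factorial k) :=
      fun k => by positivity
    rw [← ENNReal.ofReal_tsum_of_nonneg hnn hsum]
    congr 1
    rw [tsum_mul_left, hexp, ha, ← Real.exp_add, ← Real.exp_add]
  -- final assembly
  have hcongr : (fun ω => a * ∏ i ∈ Finset.range (κ ω), (c - φ (U i ω)) / lam)
      =ᵐ[μ] fun ω => a * ∏ i ∈ Finset.range (κ ω), ψ (U i ω) := by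
    filter_upwards [hUae] with ω hω
    congr 1
    refine Finset.prod_congr rfl fun i _ => ?_
    rw [hψdef]; dsimp only; rw [if_pos (hω i)]
  rw [show (∫ ω, Real.exp ((lam - c) * Δ) * ∏ i ∈ Finset.range (κ ω), (c - φ (U i ω)) / lam ∂μ)
      = ∫ ω, a * ∏ i ∈ Finset.range (κ ω), (c - φ (U i ω)) / lam ∂μ from rfl]
  rw [integral_congr_ae hcongr]
  have hh'm : Measurable fun ω => ∏ i ∈ Finset.range (κ ω), ψ (U i ω) := by
    have hm2 : Measurable fun p : Ω × ℕ => ∏ i ∈ Finset.range p.2, ψ (U i p.1) :=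
      measurable_from_prod_countable_left fun n => by
        simpa using Finset.measurable_prod (Finset.range n) (fun i _ => hψm.comp (hUm i))
    exact hm2.comp (measurable_id.prodMk hκm)
  rw [integral_eq_lintegral_of_nonneg_ae
    (ae_of_all _ fun ω => mul_nonneg ha0 (Finset.prod_nonneg fun i _ => hψ0 _))
    ((measurable_const.mul hh'm).aestronglyMeasurable)]
  have hF_eq : ∀ ω : Ω, ENNReal.ofReal (a * ∏ i ∈ Finset.range (κ ω), ψ (U i ω)) = F ω := by
    intro ω
    rw [ENNReal.ofReal_mul ha0, ENNReal.ofReal_prod_of_nonneg (fun i _ => hψ0 _)]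
  rw [lintegral_congr hF_eq, hmain, ENNReal.toReal_ofReal (Real.exp_pos _).le]
  congr 1
  have hmm : lam * Δ * mv = lam * J := by
    rw [hmvdef]; field_simp
  rw [hmm, hJval, hII]
  ring
end

section
/- Let φ: [0,Δ] → ℝ be measurable with 0 ≤ c - φ(w) ≤ λ for all w. Let κ ~ Poisson(λΔ), U_1, U_2, ... i.i.d. Uniform[0,Δ], and V_1, V_2, ... i.i.d. Uniform[0,1], all independent. Define Z = prod_{i=1}^{κ} 1{V_i ≤ (c - φ(U_i))/λ}. Then P(Z = 1) = exp((c - λ)Δ) · exp(-∫_0^Δ φ(s) ds). -/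
open MeasureTheory ProbabilityTheory

/-- The Bernoulli-factory coin `Z = ∏_{i<κ} 1{V_i ≤ (c - φ(U_i))/λ}` has success
probability `exp((c-λ)Δ) · exp(-∫₀^Δ φ(s) ds)`. -/
theorem poisson_coin_success_probability {Ω : Type*} [MeasurableSpace Ω]
    (μ : Measure Ω) [IsProbabilityMeasure μ]
    (Δ lam c : ℝ) (hΔ : 0 < Δ) (hlam : 0 < lam)
    (φ : ℝ → ℝ) (hφm : Measurable φ)
    (hφ : ∀ w ∈ Set.Icc (0:ℝ) Δ, c - φ w ∈ Set.Icc (0:ℝ) lam)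
    (κ : Ω → ℕ) (U V : ℕ → Ω → ℝ)
    (hκm : Measurable κ) (hUm : ∀ i, Measurable (U i)) (hVm : ∀ i, Measurable (V i))
    -- κ ~ Poisson(λΔ)
    (hκ : ∀ k : ℕ, μ {ω | κ ω = k}
      = ENNReal.ofReal (Real.exp (-(lam * Δ)) * (lam * Δ) ^ k / Nat.factorial k))
    -- U_i ~ Unif[0,Δ], V_i ~ Unif[0,1]
    (hU : ∀ i, μ.map (U i) = (ENNReal.ofReal Δ)⁻¹ • volume.restrict (Set.Icc (0:ℝ) Δ))
    (hV : ∀ i, μ.map (V i) = volume.restrict (Set.Icc (0:ℝ) 1))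
    -- κ, the U_i and the V_i are all independent
    (hindep : iIndepFun (m := fun _ => inferInstance)
      (fun o : Option (ℕ ⊕ ℕ) => o.elim (fun ω => (κ ω : ℝ)) (Sum.elim U V)) μ) :
    μ {ω | ∀ i < κ ω, V i ω ≤ (c - φ (U i ω)) / lam}
      = ENNReal.ofReal (Real.exp ((c - lam) * Δ) * Real.exp (-∫ s in (0:ℝ)..Δ, φ s)) := by
  classical
  set f : Option (ℕ ⊕ ℕ) → Ω → ℝ :=
    fun o : Option (ℕ ⊕ ℕ) => o.elim (fun ω => (κ ω : ℝ)) (Sum.elim U V) with hfdef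
  have hfm : ∀ o, Measurable (f o) := by
    rintro (_ | i | i)
    · exact measurable_from_top.comp hκm
    · exact hUm i
    · exact hVm i
  set g : ℝ → ℝ := fun u => (c - φ u) / lam with hgdef
  have hgm : Measurable g := (measurable_const.sub hφm).div_const lam
  have hg01 : ∀ u ∈ Set.Icc (0:ℝ) Δ, g u ∈ Set.Icc (0:ℝ) 1 := by
    intro u hu
    obtain ⟨h1, h2⟩ := hφ u hu
    exact ⟨div_nonneg h1 hlam.le, (div_le_one hlam).2 h2⟩
  set A : ℕ → Set Ω := fun i => {ω | V i ω ≤ g (U i ω)} with hAdef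
  have hAmeas : ∀ i, MeasurableSet (A i) :=
    fun i => measurableSet_le (hVm i) (hgm.comp (hUm i))
  set sA : Set (ℝ × ℝ) := {p | p.2 ≤ g p.1} with hsAdef
  have hsA : MeasurableSet sA := measurableSet_le measurable_snd (hgm.comp measurable_fst)
  -- integrability
  have hInt : IntegrableOn (fun s => c - φ s) (Set.Icc (0:ℝ) Δ) volume := by
    apply Measure.integrableOn_of_bounded (M := lam) measure_Icc_lt_top.ne
      (measurable_const.sub hφm).aestronglyMeasurable
    filter_upwards [ae_restrict_mem measurableSet_Icc] with x hx
    rw [Real.norm_eq_abs, show ((fun _ => c) - φ : ℝ → ℝ) x = c - φ x from rfl, abs_of_nonneg (hφ x hx).1]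
    exact (hφ x hx).2
  set q : ℝ := (∫ s in Set.Icc (0:ℝ) Δ, (c - φ s)) / (lam * Δ) with hqdef
  have hq0 : 0 ≤ q := by
    apply div_nonneg _ (by positivity)
    exact setIntegral_nonneg measurableSet_Icc fun x hx => (hφ x hx).1
  have hgint : ∫ u in Set.Icc (0:ℝ) Δ, g u = q * Δ := by
    rw [hgdef, hqdef]
    rw [integral_div]
    field_simp
  -- success probability of each coin
  have hA : ∀ i, μ (A i) = ENNReal.ofReal q := by
    intro i
    have hIUV : IndepFun (U i) (V i) μ :=
      hindep.indepFun (show (some (Sum.inl i) : Option (ℕ ⊕ ℕ)) ≠ some (Sum.inr i) by simp)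
    have hmapUV : μ.map (fun ω => (U i ω, V i ω)) = (μ.map (U i)).prod (μ.map (V i)) :=
      (indepFun_iff_map_prod_eq_prod_map_map (hUm i).aemeasurable (hVm i).aemeasurable).mp hIUV
    have h1 : μ (A i) = μ.map (fun ω => (U i ω, V i ω)) sA :=
      (Measure.map_apply ((hUm i).prodMk (hVm i)) hsA).symm
    rw [h1, hmapUV, hU, hV, Measure.prod_apply hsA, lintegral_smul_measure]
    have h2 : ∀ u ∈ Set.Icc (0:ℝ) Δ,
        (volume.restrict (Set.Icc (0:ℝ) 1)) (Prod.mk u ⁻¹' sA) = ENNReal.ofReal (g u) := by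
      intro u hu
      obtain ⟨hg0, hg1⟩ := hg01 u hu
      have : Prod.mk u ⁻¹' sA = Set.Iic (g u) := rfl
      rw [this, Measure.restrict_apply measurableSet_Iic]
      have : Set.Iic (g u) ∩ Set.Icc 0 1 = Set.Icc 0 (g u) := by
        ext x
        constructor
        · rintro ⟨hx1, hx2, _⟩; exact ⟨hx2, hx1⟩
        · rintro ⟨hx1, hx2⟩; exact ⟨hx2, hx1, hx2.trans hg1⟩
      rw [this, Real.volume_Icc, sub_zero]
    rw [setLIntegral_congr_fun measurableSet_Icc h2]
    rw [← ofReal_integral_eq_lintegral_ofReal (hInt.div_const lam)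
      ((ae_restrict_mem measurableSet_Icc).mono fun x hx => (hg01 x hx).1)]
    rw [hgint, ENNReal.ofReal_mul hq0, smul_eq_mul, ← mul_assoc, mul_comm _ (ENNReal.ofReal q),
        mul_assoc, ENNReal.inv_mul_cancel (ne_of_gt (ENNReal.ofReal_pos.2 hΔ))
          ENNReal.ofReal_ne_top, mul_one]
  -- the grouped independence / induction step
  have hstep : ∀ k n : ℕ,
      μ ({ω | κ ω = k} ∩ ⋂ i ∈ Finset.range n, A i)
        = μ {ω | κ ω = k} * (ENNReal.ofReal q) ^ n := by
    intro k n
    induction n with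
    | zero => simp
    | succ n ih =>
      set S : Finset (Option (ℕ ⊕ ℕ)) := {some (Sum.inl n), some (Sum.inr n)} with hS
      set T : Finset (Option (ℕ ⊕ ℕ)) :=
        insert none (((Finset.range n).image (fun i => some (Sum.inl i)))
          ∪ ((Finset.range n).image (fun i => some (Sum.inr i)))) with hT
      have hST : Disjoint S T := by
        simp only [Finset.disjoint_left, hS, hT, Finset.mem_insert, Finset.mem_singleton,
          Finset.mem_union, Finset.mem_image, Finset.mem_range]
        rintro a (rfl | rfl) <;> rintro (h | ⟨i, hi, h⟩ | ⟨i, hi, h⟩) <;>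
          simp_all
      have hTnone : (none : Option (ℕ ⊕ ℕ)) ∈ T := Finset.mem_insert_self _ _
      have hTinl : ∀ i : Fin n, some (Sum.inl (i : ℕ)) ∈ T := fun i =>
        Finset.mem_insert_of_mem (Finset.mem_union_left _
          (Finset.mem_image_of_mem _ (Finset.mem_range.2 i.2)))
      have hTinr : ∀ i : Fin n, some (Sum.inr (i : ℕ)) ∈ T := fun i =>
        Finset.mem_insert_of_mem (Finset.mem_union_right _
          (Finset.mem_image_of_mem _ (Finset.mem_range.2 i.2)))
      have hSl : (some (Sum.inl n) : Option (ℕ ⊕ ℕ)) ∈ S := by simp [hS]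
      have hSr : (some (Sum.inr n) : Option (ℕ ⊕ ℕ)) ∈ S := by simp [hS]
      set gS : ((x : S) → ℝ) → ℝ × ℝ := fun v => (v ⟨_, hSl⟩, v ⟨_, hSr⟩) with hgS
      set gT : ((x : T) → ℝ) → ℝ × (Fin n → ℝ × ℝ) := fun v =>
        (v ⟨_, hTnone⟩, fun i => (v ⟨_, hTinl i⟩, v ⟨_, hTinr i⟩)) with hgT
      have hgSm : Measurable gS := by fun_prop
      have hgTm : Measurable gT := by fun_prop
      have hYZ : IndepFun (fun ω => (U n ω, V n ω))
          (fun ω => ((κ ω : ℝ), fun i : Fin n => (U (i : ℕ) ω, V (i : ℕ) ω))) μ := by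
        have h := (hindep.indepFun_finset S T hST hfm).comp hgSm hgTm
        exact h
      set tB : Set (ℝ × (Fin n → ℝ × ℝ)) :=
        {x | x.1 = (k : ℝ) ∧ ∀ i, (x.2 i).2 ≤ g ((x.2 i).1)} with htBdef
      have htB : MeasurableSet tB := by
        have : tB = (Prod.fst ⁻¹' {(k : ℝ)}) ∩
            ⋂ i : Fin n, {x : ℝ × (Fin n → ℝ × ℝ) | (x.2 i).2 ≤ g ((x.2 i).1)} := by
          ext x
          simp [htBdef, Set.mem_iInter]
        rw [this]
        refine (measurable_fst (measurableSet_singleton _)).inter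
          (MeasurableSet.iInter fun i => ?_)
        have hxi : Measurable fun x : ℝ × (Fin n → ℝ × ℝ) => x.2 i :=
          (measurable_pi_apply i).comp measurable_snd
        exact measurableSet_le hxi.snd (hgm.comp hxi.fst)
      have hsplit : ({ω | κ ω = k} ∩ ⋂ i ∈ Finset.range (n+1), A i)
          = ((fun ω => (U n ω, V n ω)) ⁻¹' sA) ∩
            ((fun ω => ((κ ω : ℝ), fun i : Fin n => (U (i : ℕ) ω, V (i : ℕ) ω))) ⁻¹' tB) := by
        ext ω
        simp only [Set.mem_inter_iff, Set.mem_setOf_eq, Set.mem_preimage, Set.mem_iInter,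
          Finset.mem_range, Nat.cast_inj, htBdef, hsAdef, hAdef]
        constructor
        · rintro ⟨h1, h2⟩
          exact ⟨h2 n (Nat.lt_succ_self n), h1, fun i => h2 i (Nat.lt_succ_of_lt i.2)⟩
        · rintro ⟨h1, h2, h3⟩
          refine ⟨h2, fun i hi => ?_⟩
          rcases Nat.lt_succ_iff_lt_or_eq.1 hi with hi' | rfl
          · exact h3 ⟨i, hi'⟩
          · exact h1
      have hZeq : ((fun ω => ((κ ω : ℝ), fun i : Fin n => (U (i : ℕ) ω, V (i : ℕ) ω))) ⁻¹' tB)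
          = {ω | κ ω = k} ∩ ⋂ i ∈ Finset.range n, A i := by
        ext ω
        simp only [Set.mem_inter_iff, Set.mem_setOf_eq, Set.mem_preimage, Set.mem_iInter,
          Finset.mem_range, Nat.cast_inj, htBdef, hAdef, Fin.forall_iff]
      rw [hsplit, hYZ.measure_inter_preimage_eq_mul sA tB hsA htB, hZeq, ih]
      have : (fun ω => (U n ω, V n ω)) ⁻¹' sA = A n := rfl
      rw [this, hA n, pow_succ]
      ring
  -- decompose the event according to the value of κ
  have hM : {ω | ∀ i < κ ω, V i ω ≤ (c - φ (U i ω)) / lam}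
      = ⋃ k : ℕ, ({ω | κ ω = k} ∩ ⋂ i ∈ Finset.range k, A i) := by
    ext ω
    simp only [Set.mem_setOf_eq, Set.mem_iUnion, Set.mem_inter_iff, Set.mem_iInter,
      Finset.mem_range, hAdef, hgdef]
    constructor
    · intro h; exact ⟨κ ω, rfl, fun i hi => h i hi⟩
    · rintro ⟨k, rfl, h⟩ i hi; exact h i hi
  have hdisj : Pairwise (Function.onFun Disjoint
      fun k => ({ω | κ ω = k} ∩ ⋂ i ∈ Finset.range k, A i)) := by
    intro j k hjk
    simp only [Function.onFun, Set.disjoint_left]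
    rintro ω ⟨h1, -⟩ ⟨h2, -⟩
    exact hjk (h1.symm.trans h2)
  have hmeas : ∀ k : ℕ, MeasurableSet ({ω | κ ω = k} ∩ ⋂ i ∈ Finset.range k, A i) := by
    intro k
    refine (hκm (measurableSet_singleton k)).inter ?_
    exact MeasurableSet.biInter (Set.to_countable _) fun i _ => hAmeas i
  rw [hM, measure_iUnion hdisj hmeas]
  simp_rw [hstep, hκ]
  have hsum : ∀ k : ℕ, ENNReal.ofReal (Real.exp (-(lam * Δ)) * (lam * Δ) ^ k / k.factorial)
        * (ENNReal.ofReal q) ^ k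
      = ENNReal.ofReal (Real.exp (-(lam * Δ)) * (lam * Δ * q) ^ k / k.factorial) := by
    intro k
    rw [← ENNReal.ofReal_pow hq0, ← ENNReal.ofReal_mul (by positivity)]
    congr 1
    rw [mul_pow]
    ring
  simp_rw [hsum]
  have hsummable : Summable (fun k : ℕ =>
      Real.exp (-(lam * Δ)) * (lam * Δ * q) ^ k / (k.factorial : ℝ)) := by
    simp_rw [mul_div_assoc]
    exact (Real.summable_pow_div_factorial (lam * Δ * q)).mul_left _
  rw [← ENNReal.ofReal_tsum_of_nonneg (fun k => by positivity) hsummable]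
  congr 1
  have hexp : ∀ x : ℝ, ∑' k : ℕ, x ^ k / (k.factorial : ℝ) = Real.exp x := fun x => by
    rw [Real.exp_eq_exp_ℝ, NormedSpace.exp_eq_tsum_div]
  have h1 : ∑' k : ℕ, Real.exp (-(lam * Δ)) * (lam * Δ * q) ^ k / (k.factorial : ℝ)
      = Real.exp (-(lam * Δ)) * Real.exp (lam * Δ * q) := by
    simp_rw [mul_div_assoc]
    rw [tsum_mul_left, hexp]
  rw [h1]
  -- identify λΔq with the integral
  have hlq : lam * Δ * q = ∫ s in Set.Icc (0:ℝ) Δ, (c - φ s) := by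
    rw [hqdef, mul_div_cancel₀]
    positivity
  have hφInt : IntegrableOn φ (Set.Icc (0:ℝ) Δ) volume := by
    have h2 := (integrableOn_const measure_Icc_lt_top.ne :
      IntegrableOn (fun _ => c) (Set.Icc (0:ℝ) Δ) volume).sub hInt
    have h3 : ((fun _ => c) - fun s => c - φ s) = φ := by
      funext x; simp
    rwa [h3] at h2
  have hsplit2 : ∫ s in Set.Icc (0:ℝ) Δ, (c - φ s)
      = c * Δ - ∫ s in Set.Icc (0:ℝ) Δ, φ s := by
    rw [integral_sub (integrableOn_const measure_Icc_lt_top.ne :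
      IntegrableOn (fun _ => c) (Set.Icc (0:ℝ) Δ) volume) hφInt]
    congr 1
    rw [setIntegral_const, Measure.real, Real.volume_Icc, sub_zero, ENNReal.toReal_ofReal hΔ.le, smul_eq_mul,
      mul_comm]
  have hIoc : ∫ s in (0:ℝ)..Δ, φ s = ∫ s in Set.Icc (0:ℝ) Δ, φ s := by
    rw [intervalIntegral.integral_of_le hΔ.le, ← integral_Icc_eq_integral_Ioc]
  rw [hlq, hsplit2, hIoc, ← Real.exp_add, ← Real.exp_add]
  congr 1
  ring
end

section
/- Let λ: [t_0, t_1] → [0, λ_max] be a measurable intensity function. Sample K ~ Poisson(λ_max (t_1 - t_0)), U_1, U_2, ... i.i.d. Uniform[t_0, t_1], and V_1, V_2, ... i.i.d. Uniform[0,1], all independent. Then Z = prod_{i=1}^{K} 1{V_i ≤ (λ_max - λ(U_i))/λ_max} satisfies E[Z] = exp(-∫_{t_0}^{t_1} λ(s) ds). -/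
open MeasureTheory ProbabilityTheory

/-- Thinning-based unbiased coin for the survival probability of a Poisson process:
`E[∏_{i<K} 1{V_i ≤ (λmax - λ(U_i))/λmax}] = exp(-∫_{t₀}^{t₁} λ(s) ds)`. -/
theorem cox_thinning_coin_unbiased {Ω : Type*} [MeasurableSpace Ω]
    (μ : Measure Ω) [IsProbabilityMeasure μ]
    (t₀ t₁ lamMax : ℝ) (ht : t₀ < t₁) (hlam : 0 < lamMax)
    (lam : ℝ → ℝ) (hlamm : Measurable lam)
    (hrange : ∀ s ∈ Set.Icc t₀ t₁, lam s ∈ Set.Icc (0:ℝ) lamMax)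
    (K : Ω → ℕ) (U V : ℕ → Ω → ℝ)
    (hKm : Measurable K) (hUm : ∀ i, Measurable (U i)) (hVm : ∀ i, Measurable (V i))
    -- K ~ Poisson(λmax (t₁ - t₀))
    (hK : ∀ k : ℕ, μ {ω | K ω = k}
      = ENNReal.ofReal (Real.exp (-(lamMax * (t₁ - t₀))) * (lamMax * (t₁ - t₀)) ^ k
          / Nat.factorial k))
    -- U_i ~ Unif[t₀,t₁], V_i ~ Unif[0,1]
    (hU : ∀ i, μ.map (U i) = (ENNReal.ofReal (t₁ - t₀))⁻¹ • volume.restrict (Set.Icc t₀ t₁))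
    (hV : ∀ i, μ.map (V i) = volume.restrict (Set.Icc (0:ℝ) 1))
    -- K, the U_i and the V_i are all independent
    (hindep : iIndepFun
      (fun o : Option (ℕ ⊕ ℕ) => o.elim (fun ω => (K ω : ℝ)) (Sum.elim U V)) μ) :
    ∫ ω, ∏ i ∈ Finset.range (K ω),
        (if V i ω ≤ (lamMax - lam (U i ω)) / lamMax then (1:ℝ) else 0) ∂μ
      = Real.exp (-∫ s in t₀..t₁, lam s) := by
  classical
  set p : ℝ → ℝ := fun u => (lamMax - lam u) / lamMax with hp_def
  have hp : Measurable p := (measurable_const.sub hlamm).div_const _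
  set I : ℝ := ∫ s in t₀..t₁, lam s with hI_def
  set Λ : ℝ := lamMax * (t₁ - t₀) with hΛ_def
  set q : ℝ := (Λ - I) / Λ with hq_def
  -- basic facts about the intensity
  have hlamIcc : IntegrableOn lam (Set.Icc t₀ t₁) volume := by
    refine Integrable.mono' (integrable_const lamMax) hlamm.aestronglyMeasurable ?_
    refine (ae_restrict_iff' measurableSet_Icc).mpr (Filter.Eventually.of_forall fun s hs => ?_)
    have := hrange s hs
    rw [Real.norm_eq_abs, abs_of_nonneg this.1]; exact this.2
  have hlamInt : IntervalIntegrable lam volume t₀ t₁ := by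
    rw [intervalIntegrable_iff_integrableOn_Icc_of_le ht.le]; exact hlamIcc
  have hI0 : 0 ≤ I := by
    apply intervalIntegral.integral_nonneg ht.le
    intro s hs; exact (hrange s hs).1
  have hIΛ : I ≤ Λ := by
    have : I ≤ ∫ s in t₀..t₁, lamMax := by
      apply intervalIntegral.integral_mono_on ht.le hlamInt intervalIntegrable_const
      intro s hs; exact (hrange s hs).2
    simpa [mul_comm] using this
  have hΛ0 : 0 < Λ := mul_pos hlam (by linarith)
  have hq0 : 0 ≤ q := div_nonneg (by linarith) hΛ0.le
  -- the family
  set X : Option (ℕ ⊕ ℕ) → Ω → ℝ :=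
    fun o : Option (ℕ ⊕ ℕ) => o.elim (fun ω => (K ω : ℝ)) (Sum.elim U V) with hX_def
  have hXm : ∀ o, Measurable (X o) := by
    rintro (_ | i | i)
    · exact measurable_from_top.comp hKm
    · exact hUm i
    · exact hVm i
  -- sets
  set C : ℕ → Set Ω := fun i => {ω | V i ω ≤ p (U i ω)} with hC_def
  have hCm : ∀ i, MeasurableSet (C i) := fun i =>
    measurableSet_le (hVm i) (hp.comp (hUm i))
  set A : ℕ → Set Ω := fun n => {ω | ∀ i < n, V i ω ≤ p (U i ω)} with hA_def
  have hA_eq : ∀ n, A n = ⋂ i ∈ Finset.range n, C i := by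
    intro n; ext ω; simp [hA_def, hC_def]
  have hAm : ∀ n, MeasurableSet (A n) := by
    intro n; rw [hA_eq]
    exact MeasurableSet.biInter (Finset.range n).countable_toSet fun i _ => hCm i
  have hA_succ : ∀ n, A (n + 1) = A n ∩ C n := by
    intro n; ext ω
    constructor
    · intro h; exact ⟨fun i hi => h i (by omega), h n (by omega)⟩
    · rintro ⟨h1, h2⟩ i hi
      rcases Nat.lt_succ_iff_lt_or_eq.mp hi with h | rfl
      · exact h1 i h
      · exact h2
  -- block finsets
  set blk : ℕ → Finset (Option (ℕ ⊕ ℕ)) := fun n =>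
    ((Finset.range n).image fun i => (some (Sum.inl i) : Option (ℕ ⊕ ℕ))) ∪
    ((Finset.range n).image fun i => (some (Sum.inr i) : Option (ℕ ⊕ ℕ))) with hblk_def
  have hmeml : ∀ {i n : ℕ}, i < n → (some (Sum.inl i) : Option (ℕ ⊕ ℕ)) ∈ blk n := by
    intro i n hi
    exact Finset.mem_union_left _ (Finset.mem_image_of_mem _ (Finset.mem_range.mpr hi))
  have hmemr : ∀ {i n : ℕ}, i < n → (some (Sum.inr i) : Option (ℕ ⊕ ℕ)) ∈ blk n := by
    intro i n hi
    exact Finset.mem_union_right _ (Finset.mem_image_of_mem _ (Finset.mem_range.mpr hi))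
  -- the set in the pi space corresponding to A n
  set sA : (n : ℕ) → Set ({x // x ∈ blk n} → ℝ) := fun n =>
    {v | ∀ i : Fin n, v ⟨some (Sum.inr (i:ℕ)), hmemr i.2⟩
      ≤ p (v ⟨some (Sum.inl (i:ℕ)), hmeml i.2⟩)} with hsA_def
  have hsAm : ∀ n, MeasurableSet (sA n) := by
    intro n
    have : sA n = ⋂ i : Fin n,
        {v : {x // x ∈ blk n} → ℝ |
          v ⟨some (Sum.inr (i:ℕ)), hmemr i.2⟩ ≤ p (v ⟨some (Sum.inl (i:ℕ)), hmeml i.2⟩)} := by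
      ext v; simp [hsA_def]
    rw [this]
    exact MeasurableSet.iInter fun i =>
      measurableSet_le (measurable_pi_apply _) (hp.comp (measurable_pi_apply _))
  have hsA_pre : ∀ n, (fun ω (i : {x // x ∈ blk n}) => X i ω) ⁻¹' sA n = A n := by
    intro n; ext ω
    constructor
    · intro h i hi; exact h ⟨i, hi⟩
    · intro h i; exact h (i:ℕ) i.2
  -- factorization of {K = k} ∩ A n
  have hKA : ∀ (n k : ℕ), μ ({ω | K ω = k} ∩ A n) = μ {ω | K ω = k} * μ (A n) := by
    intro n k
    have hd : Disjoint ({none} : Finset (Option (ℕ ⊕ ℕ))) (blk n) := by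
      simp [hblk_def]
    have hind := hindep.indepFun_finset {none} (blk n) hd hXm
    have hs : MeasurableSet {v : {x // x ∈ ({none} : Finset (Option (ℕ ⊕ ℕ)))} → ℝ |
        v ⟨none, Finset.mem_singleton_self none⟩ = (k:ℝ)} :=
      (measurable_pi_apply _) (measurableSet_singleton _)
    have key := hind.measure_inter_preimage_eq_mul _ _ hs (hsAm n)
    have hpre1 : (fun ω (i : {x // x ∈ ({none} : Finset (Option (ℕ ⊕ ℕ)))}) => X i ω) ⁻¹'
        {v | v ⟨none, Finset.mem_singleton_self none⟩ = (k:ℝ)} = {ω | K ω = k} := by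
      ext ω; simp [hX_def]
    rw [hpre1, hsA_pre n] at key
    exact key
  -- factorization of A n ∩ C n
  have hAC : ∀ n : ℕ, μ (A n ∩ C n) = μ (A n) * μ (C n) := by
    intro n
    have hd : Disjoint (blk n)
        ({some (Sum.inl n), some (Sum.inr n)} : Finset (Option (ℕ ⊕ ℕ))) := by
      simp only [Finset.disjoint_right, hblk_def, Finset.mem_union, Finset.mem_image,
        Finset.mem_range, Finset.mem_insert, Finset.mem_singleton]
      rintro a (rfl | rfl) <;> rintro (⟨i, hi, h⟩ | ⟨i, hi, h⟩) <;> simp_all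
    have hind := hindep.indepFun_finset (blk n)
      ({some (Sum.inl n), some (Sum.inr n)} : Finset (Option (ℕ ⊕ ℕ))) hd hXm
    have hml : (some (Sum.inl n) : Option (ℕ ⊕ ℕ))
        ∈ ({some (Sum.inl n), some (Sum.inr n)} : Finset (Option (ℕ ⊕ ℕ))) := by simp
    have hmr : (some (Sum.inr n) : Option (ℕ ⊕ ℕ))
        ∈ ({some (Sum.inl n), some (Sum.inr n)} : Finset (Option (ℕ ⊕ ℕ))) := by simp
    have hs : MeasurableSet {v : {x // x ∈ ({some (Sum.inl n), some (Sum.inr n)} :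
        Finset (Option (ℕ ⊕ ℕ)))} → ℝ | v ⟨some (Sum.inr n), hmr⟩ ≤ p (v ⟨some (Sum.inl n), hml⟩)} :=
      measurableSet_le (measurable_pi_apply _) (hp.comp (measurable_pi_apply _))
    have key := hind.measure_inter_preimage_eq_mul _ _ (hsAm n) hs
    have hpre2 : (fun ω (i : {x // x ∈ ({some (Sum.inl n), some (Sum.inr n)} :
        Finset (Option (ℕ ⊕ ℕ)))}) => X i ω) ⁻¹'
        {v | v ⟨some (Sum.inr n), hmr⟩ ≤ p (v ⟨some (Sum.inl n), hml⟩)} = C n := by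
      ext ω; simp [hX_def, hC_def]
    rw [hpre2, hsA_pre n] at key
    exact key
  -- the probability of one thinning event
  have hCq : ∀ n : ℕ, μ (C n) = ENNReal.ofReal q := by
    intro n
    have hUV : IndepFun (U n) (V n) μ := by
      have := hindep.indepFun (i := some (Sum.inl n)) (j := some (Sum.inr n)) (by simp)
      exact this
    have hmap : μ.map (fun ω => (U n ω, V n ω)) = (μ.map (U n)).prod (μ.map (V n)) :=
      (indepFun_iff_map_prod_eq_prod_map_map (hUm n).aemeasurable (hVm n).aemeasurable).mp hUV
    have hSm : MeasurableSet {x : ℝ × ℝ | x.2 ≤ p x.1} :=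
      measurableSet_le measurable_snd (hp.comp measurable_fst)
    have h1 : μ (C n) = (μ.map (fun ω => (U n ω, V n ω))) {x : ℝ × ℝ | x.2 ≤ p x.1} := by
      rw [Measure.map_apply ((hUm n).prodMk (hVm n)) hSm]
      rfl
    rw [h1, hmap, hU n, hV n, Measure.prod_apply hSm, lintegral_smul_measure]
    have h2 : ∀ u ∈ Set.Icc t₀ t₁,
        (volume.restrict (Set.Icc (0:ℝ) 1)) (Prod.mk u ⁻¹' {x : ℝ × ℝ | x.2 ≤ p x.1})
          = ENNReal.ofReal (p u) := by
      intro u hu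
      have hpu0 : 0 ≤ p u := div_nonneg (by linarith [(hrange u hu).2]) hlam.le
      have hpu1 : p u ≤ 1 := by
        rw [hp_def, div_le_one hlam]; linarith [(hrange u hu).1]
      have hpre : Prod.mk u ⁻¹' {x : ℝ × ℝ | x.2 ≤ p x.1} = Set.Iic (p u) := rfl
      rw [hpre, Measure.restrict_apply measurableSet_Iic]
      have : Set.Iic (p u) ∩ Set.Icc (0:ℝ) 1 = Set.Icc 0 (p u) := by
        ext x
        simp only [Set.mem_inter_iff, Set.mem_Iic, Set.mem_Icc]
        constructor
        · rintro ⟨h1, h2, h3⟩; exact ⟨h2, h1⟩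
        · rintro ⟨h1, h2⟩; exact ⟨h2, h1, le_trans h2 hpu1⟩
      rw [this, Real.volume_Icc, sub_zero]
    rw [setLIntegral_congr_fun measurableSet_Icc h2]
    have hpInt : Integrable p (volume.restrict (Set.Icc t₀ t₁)) :=
      ((integrable_const lamMax).sub hlamIcc).div_const lamMax
    have hp_nn : 0 ≤ᵐ[volume.restrict (Set.Icc t₀ t₁)] p := by
      refine (ae_restrict_iff' measurableSet_Icc).mpr (Filter.Eventually.of_forall fun u hu => ?_)
      exact div_nonneg (by linarith [(hrange u hu).2]) hlam.le
    rw [← ofReal_integral_eq_lintegral_ofReal hpInt hp_nn]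
    have h3 : ∫ u in Set.Icc t₀ t₁, p u = (Λ - I) / lamMax := by
      rw [integral_Icc_eq_integral_Ioc, ← intervalIntegral.integral_of_le ht.le]
      rw [hp_def]
      rw [intervalIntegral.integral_div]
      rw [intervalIntegral.integral_sub intervalIntegrable_const hlamInt]
      rw [intervalIntegral.integral_const]
      rw [hΛ_def, hI_def, smul_eq_mul]
      have hlam0 : lamMax ≠ 0 := ne_of_gt hlam
      field_simp
    rw [h3, ← ENNReal.ofReal_inv_of_pos (by linarith : (0:ℝ) < t₁ - t₀), smul_eq_mul,
      ← ENNReal.ofReal_mul (inv_nonneg.mpr (by linarith : (0:ℝ) ≤ t₁ - t₀))]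
    rw [inv_mul_eq_div, div_div, hq_def, hΛ_def]
  -- μ (A n) = q ^ n
  have hAq : ∀ n : ℕ, μ (A n) = ENNReal.ofReal q ^ n := by
    intro n
    induction n with
    | zero =>
      have : A 0 = Set.univ :=
        Set.eq_univ_iff_forall.mpr fun ω i hi => absurd hi (Nat.not_lt_zero i)
      rw [this, measure_univ, pow_zero]
    | succ n ih =>
      rw [hA_succ n, hAC n, ih, hCq n, pow_succ]
  -- the global event
  set B : Set Ω := ⋃ k, ({ω | K ω = k} ∩ A k) with hB_def
  have hBm : MeasurableSet B :=
    MeasurableSet.iUnion fun k => (hKm (measurableSet_singleton k)).inter (hAm k)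
  have hint_eq : ∀ ω, (∏ i ∈ Finset.range (K ω),
      (if V i ω ≤ (lamMax - lam (U i ω)) / lamMax then (1:ℝ) else 0))
        = B.indicator (fun _ => (1:ℝ)) ω := by
    intro ω
    rw [Finset.prod_boole]
    by_cases h : ∀ i ∈ Finset.range (K ω), V i ω ≤ (lamMax - lam (U i ω)) / lamMax
    · rw [if_pos h, Set.indicator_of_mem, ]
      exact Set.mem_iUnion.mpr ⟨K ω, rfl, fun i hi => h i (Finset.mem_range.mpr hi)⟩
    · rw [if_neg h, Set.indicator_of_notMem]
      intro hmem
      rcases Set.mem_iUnion.mp hmem with ⟨k, hk, hA⟩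
      have hkK : K ω = k := hk
      exact h fun i hi => hA i (hkK ▸ Finset.mem_range.mp hi)
  have hμB : μ B = ∑' k : ℕ, μ ({ω | K ω = k} ∩ A k) := by
    apply measure_iUnion
    · intro k k' hkk'
      rw [Function.onFun, Set.disjoint_left]
      rintro ω ⟨h1, _⟩ ⟨h2, _⟩
      exact hkk' (h1.symm.trans h2)
    · exact fun k => (hKm (measurableSet_singleton k)).inter (hAm k)
  have hterm : ∀ k : ℕ, μ ({ω | K ω = k} ∩ A k)
      = ENNReal.ofReal (Real.exp (-Λ) * ((Λ - I) ^ k / Nat.factorial k)) := by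
    intro k
    rw [hKA k k, hK k, hAq k, ← ENNReal.ofReal_pow hq0, ← ENNReal.ofReal_mul (by positivity)]
    congr 1
    have : Λ * q = Λ - I := by
      rw [hq_def]; field_simp
    rw [div_mul_eq_mul_div, mul_assoc, ← mul_pow, this, mul_div_assoc]
  have hsummable : Summable (fun k : ℕ => Real.exp (-Λ) * ((Λ - I) ^ k / Nat.factorial k)) :=
    (Real.summable_pow_div_factorial (Λ - I)).mul_left _
  have htsum : ∑' k : ℕ, Real.exp (-Λ) * ((Λ - I) ^ k / Nat.factorial k) = Real.exp (-I) := by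
    rw [tsum_mul_left]
    have : ∑' k : ℕ, (Λ - I) ^ k / (Nat.factorial k : ℝ) = Real.exp (Λ - I) := by
      rw [Real.exp_eq_exp_ℝ]
      exact (NormedSpace.expSeries_div_hasSum_exp (Λ - I)).tsum_eq
    rw [this, ← Real.exp_add]
    ring_nf
  have hμB' : μ B = ENNReal.ofReal (Real.exp (-I)) := by
    rw [hμB]
    have := ENNReal.ofReal_tsum_of_nonneg
      (fun k => mul_nonneg (Real.exp_pos _).le
        (div_nonneg (pow_nonneg (by linarith) k) (Nat.cast_nonneg _))) hsummable
    rw [funext hterm] at *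
    rw [← this, htsum]
  calc ∫ ω, ∏ i ∈ Finset.range (K ω),
        (if V i ω ≤ (lamMax - lam (U i ω)) / lamMax then (1:ℝ) else 0) ∂μ
      = ∫ ω, B.indicator (fun _ => (1:ℝ)) ω ∂μ := by
        exact integral_congr_ae (Filter.Eventually.of_forall hint_eq)
    _ = (μ B).toReal := by
        exact integral_indicator_one hBm
    _ = Real.exp (-I) := by rw [hμB', ENNReal.toReal_ofReal (Real.exp_pos _).le]
end

section
/- Let I_1, ..., I_N be i.i.d. draws from the Bernoulli race output distribution p(i) = c_i b_i / sum_k c_k b_k, with C_1,...,C_N the corresponding i.i.d. geometric iteration counts with success probability ρ_N = sum_k c_k b_k / sum_k c_k. Then the random variable ((1/N) sum_{k=1}^N c_k) · (N−1)/(sum_{k=1}^N C_k − 1) is an unbiased estimator of (1/N) sum_{k=1}^N c_k b_k. -/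
open MeasureTheory ProbabilityTheory

lemma geom_zero {Ω : Type*} [MeasurableSpace Ω] (μ : Measure Ω) [IsProbabilityMeasure μ]
    {ρ : ℝ} (hρ0 : 0 < ρ) (hρ1 : ρ ≤ 1) (X : Ω → ℕ) (hX : Measurable X)
    (hgeom : ∀ n : ℕ, 1 ≤ n → μ {ω | X ω = n} = ENNReal.ofReal (ρ * (1 - ρ) ^ (n - 1))) :
    μ {ω | X ω = 0} = 0 := by
  have hdisj : Pairwise (Function.onFun Disjoint fun n : ℕ => {ω | X ω = n}) := by
    intro m n hmn
    simp only [Function.onFun, Set.disjoint_left]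
    rintro ω (h1 : X ω = m) (h2 : X ω = n)
    exact hmn (h1 ▸ h2 ▸ rfl)
  have hmeas : ∀ n : ℕ, MeasurableSet {ω | X ω = n} := fun n =>
    hX (measurableSet_singleton n)
  have huniv : (⋃ n : ℕ, {ω | X ω = n}) = Set.univ := by
    ext ω; simp
  have htot : ∑' n : ℕ, μ {ω | X ω = n} = 1 := by
    rw [← measure_iUnion hdisj hmeas, huniv, measure_univ]
  have hsum1 : ∑' n : ℕ, μ {ω | X ω = n + 1} = 1 := by
    have hr0 : (0:ℝ) ≤ 1 - ρ := by linarith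
    have hr1 : 1 - ρ < 1 := by linarith
    have : ∀ n : ℕ, μ {ω | X ω = n + 1} = ENNReal.ofReal (ρ * (1 - ρ) ^ n) := by
      intro n; rw [hgeom (n+1) (by omega)]; simp
    rw [tsum_congr this, ← ENNReal.ofReal_tsum_of_nonneg
      (fun n => by positivity) (by
        exact (summable_geometric_of_lt_one hr0 hr1).mul_left ρ)]
    rw [tsum_mul_left, tsum_geometric_of_lt_one hr0 hr1]
    rw [show 1 - (1 - ρ) = ρ by ring, mul_inv_cancel₀ (ne_of_gt hρ0)]
    exact ENNReal.ofReal_one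
  have hsplit : ∑' n : ℕ, μ {ω | X ω = n}
      = μ {ω | X ω = 0} + ∑' n : ℕ, μ {ω | X ω = n + 1} :=
    tsum_eq_zero_add' ENNReal.summable
  rw [hsplit, hsum1] at htot
  have h' : 1 + μ {ω | X ω = 0} = 1 + 0 := by rw [add_comm, htot, add_zero]
  exact (ENNReal.add_right_inj ENNReal.one_ne_top).mp h'

lemma nat_conv (m s : ℕ) (hm : 1 ≤ m) (hs : m + 1 ≤ s) :
    ∑ n ∈ Finset.Icc 1 (s - m), (s - n - 1).choose (m - 1) = (s - 1).choose m := by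
  have h1 : ∑ n ∈ Finset.Icc 1 (s - m), (s - n - 1).choose (m - 1)
      = ∑ j ∈ Finset.Icc (m - 1) (s - 2), j.choose (m - 1) := by
    apply Finset.sum_nbij' (i := fun n => s - n - 1) (j := fun j => s - j - 1)
    · intro n hn; simp only [Finset.mem_Icc] at *; omega
    · intro j hj; simp only [Finset.mem_Icc] at *; omega
    · intro n hn; simp only [Finset.mem_Icc] at hn; omega
    · intro j hj; simp only [Finset.mem_Icc] at hj; omega
    · intro n hn; rfl
  rw [h1, Nat.sum_Icc_choose]
  congr 1 <;> omega

lemma real_conv {ρ : ℝ} (m s : ℕ) (hm : 1 ≤ m) (hs : m + 1 ≤ s) :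
    ∑ n ∈ Finset.Icc 1 (s - m),
      ρ * (1 - ρ) ^ (n - 1) * (((s - n - 1).choose (m - 1) : ℝ) * ρ ^ m * (1 - ρ) ^ (s - n - m))
    = (((s - 1).choose m : ℝ)) * ρ ^ (m + 1) * (1 - ρ) ^ (s - (m + 1)) := by
  have h1 : ∀ n ∈ Finset.Icc 1 (s - m),
      ρ * (1 - ρ) ^ (n - 1) * (((s - n - 1).choose (m - 1) : ℝ) * ρ ^ m * (1 - ρ) ^ (s - n - m))
      = ((s - n - 1).choose (m - 1) : ℝ) * (ρ ^ (m + 1) * (1 - ρ) ^ (s - (m + 1))) := by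
    intro n hn
    simp only [Finset.mem_Icc] at hn
    have he : (n - 1) + (s - n - m) = s - (m + 1) := by omega
    rw [← he, pow_add, pow_succ]
    ring
  rw [Finset.sum_congr rfl h1, ← Finset.sum_mul, ← Nat.cast_sum, nat_conv m s hm hs]
  ring

lemma negbinom_dist {Ω ι : Type*} [MeasurableSpace Ω] (μ : Measure Ω) [IsProbabilityMeasure μ]
    {ρ : ℝ} (hρ0 : 0 < ρ) (hρ1 : ρ ≤ 1) (C : ι → Ω → ℕ) (hmeas : ∀ k, Measurable (C k))
    (hindep : iIndepFun C μ)
    (hgeom : ∀ k, ∀ n : ℕ, 1 ≤ n →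
      μ {ω | C k ω = n} = ENNReal.ofReal (ρ * (1 - ρ) ^ (n - 1)))
    (t : Finset ι) :
    ∀ s : ℕ, t.Nonempty →
      μ {ω | ∑ k ∈ t, C k ω = s} =
        if t.card ≤ s then
          ENNReal.ofReal (((s - 1).choose (t.card - 1) : ℝ) * ρ ^ t.card
            * (1 - ρ) ^ (s - t.card))
        else 0 := by
  classical
  induction t using Finset.cons_induction with
  | empty => intro s ht; exact absurd ht (by simp)
  | cons a t ha ih =>
    intro s _
    by_cases htne : t.Nonempty
    case neg =>
      -- t = ∅, so cons a t = {a}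
      have ht0 : t = ∅ := Finset.not_nonempty_iff_eq_empty.mp htne
      subst ht0
      have hset : {ω | ∑ k ∈ Finset.cons a ∅ ha, C k ω = s} = {ω | C a ω = s} := by
        ext ω; simp
      rw [hset]
      simp only [Finset.card_cons, Finset.card_empty, zero_add]
      by_cases hs : 1 ≤ s
      · rw [if_pos hs, hgeom a s hs]
        have : (s - 1).choose (1 - 1) = 1 := by simp
        rw [this]
        norm_num
      · have hs0 : s = 0 := by omega
        subst hs0
        rw [if_neg (by omega)]
        exact geom_zero μ hρ0 hρ1 (C a) (hmeas a) (hgeom a)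
    case pos =>
      set m := t.card with hm_def
      have hm : 1 ≤ m := Finset.card_pos.mpr htne
      set S : Ω → ℕ := fun ω => ∑ k ∈ t, C k ω with hS_def
      have hS : Measurable S := Finset.measurable_sum _ (fun k _ => hmeas k)
      set f : ℕ → Set Ω := fun n => {ω | C a ω = n} ∩ {ω | n + S ω = s} with hf_def
      have hU : {ω | ∑ k ∈ Finset.cons a t ha, C k ω = s} = ⋃ n, f n := by
        ext ω
        simp only [Finset.sum_cons, Set.mem_setOf_eq, Set.mem_iUnion, Set.mem_inter_iff, f]
        constructor
        · intro h; exact ⟨C a ω, rfl, h⟩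
        · rintro ⟨n, rfl, h⟩; exact h
      have hfmeas : ∀ n, MeasurableSet (f n) :=
        fun n => ((hmeas a) (measurableSet_singleton n)).inter
          (hS (by trivial : MeasurableSet {x : ℕ | n + x = s}))
      have hdisj : Pairwise (Function.onFun Disjoint f) := by
        intro i j hij
        simp only [Function.onFun, Set.disjoint_left, f]
        rintro ω ⟨(h1 : C a ω = i), -⟩ ⟨(h2 : C a ω = j), -⟩
        exact hij (h1 ▸ h2 ▸ rfl)
      have hmuU : μ {ω | ∑ k ∈ Finset.cons a t ha, C k ω = s} = ∑' n, μ (f n) := by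
        rw [hU, measure_iUnion hdisj hfmeas]
      -- independence
      have hInd : IndepFun (C a) (fun ω => ∑ j ∈ t, C j ω) μ := by
        have h := (hindep.indepFun_finsetSum_of_notMem hmeas ha).symm
        have he : (∑ j ∈ t, C j) = fun ω => ∑ j ∈ t, C j ω := by
          ext ω; simp [Finset.sum_apply]
        rwa [he] at h
      -- value of μ (f n)
      have hf0 : μ (f 0) = 0 := by
        apply measure_mono_null (Set.inter_subset_left)
        exact geom_zero μ hρ0 hρ1 (C a) (hmeas a) (hgeom a)
      have hfn : ∀ n, 1 ≤ n → n ≤ s →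
          μ (f n) = ENNReal.ofReal (ρ * (1 - ρ) ^ (n - 1)) * μ {ω | S ω = s - n} := by
        intro n h1 h2
        have hset : f n = (C a) ⁻¹' {n} ∩ S ⁻¹' {s - n} := by
          ext ω
          simp only [f, Set.mem_inter_iff, Set.mem_setOf_eq, Set.mem_preimage,
            Set.mem_singleton_iff]
          constructor
          · rintro ⟨hc, hsum⟩; exact ⟨hc, by omega⟩
          · rintro ⟨hc, hsum⟩; exact ⟨hc, by omega⟩
        rw [hset, hInd.measure_inter_preimage_eq_mul _ _ (measurableSet_singleton n)
          (measurableSet_singleton (s - n))]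
        congr 1
        · exact hgeom a n h1
      have hbig : ∀ n, s < n → μ (f n) = 0 := by
        intro n hn
        have : f n = ∅ := by
          ext ω
          simp only [f, Set.mem_inter_iff, Set.mem_setOf_eq, Set.mem_empty_iff_false,
            iff_false, not_and]
          intro _; omega
        rw [this, measure_empty]
      have htsum : ∑' n, μ (f n) = ∑ n ∈ Finset.range (s + 1), μ (f n) := by
        apply tsum_eq_sum
        intro n hn
        simp only [Finset.mem_range, not_lt] at hn
        exact hbig n (by omega)
      rw [hmuU, htsum]
      have hcard : (Finset.cons a t ha).card = m + 1 := by
        rw [Finset.card_cons]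
      rw [hcard]
      have hr0 : (0:ℝ) ≤ 1 - ρ := by linarith
      have hnn : ∀ n : ℕ, 0 ≤ ρ * (1 - ρ) ^ (n - 1)
          * (((s - n - 1).choose (m - 1) : ℝ) * ρ ^ m * (1 - ρ) ^ (s - n - m)) := by
        intro n
        apply mul_nonneg (mul_nonneg hρ0.le (pow_nonneg hr0 _))
        apply mul_nonneg (mul_nonneg (Nat.cast_nonneg _) (pow_nonneg hρ0.le _))
          (pow_nonneg hr0 _)
      by_cases hcase : m + 1 ≤ s
      case neg =>
        rw [if_neg hcase]
        apply Finset.sum_eq_zero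
        intro n hn
        simp only [Finset.mem_range] at hn
        rcases Nat.eq_zero_or_pos n with h0 | h1
        · subst h0; exact hf0
        · rw [hfn n h1 (by omega), ih (s - n) htne, if_neg (by omega), mul_zero]
      case pos =>
        rw [if_pos hcase]
        have hsub : Finset.Icc 1 (s - m) ⊆ Finset.range (s + 1) := by
          intro n hn
          simp only [Finset.mem_Icc, Finset.mem_range] at *
          omega
        have hvanish : ∀ n ∈ Finset.range (s + 1), n ∉ Finset.Icc 1 (s - m) → μ (f n) = 0 := by
          intro n hn hn'
          simp only [Finset.mem_range] at hn
          simp only [Finset.mem_Icc, not_and, not_le] at hn'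
          rcases Nat.eq_zero_or_pos n with h0 | h1
          · subst h0; exact hf0
          · have h2 : s - m < n := hn' h1
            rw [hfn n h1 (by omega), ih (s - n) htne, if_neg (by omega), mul_zero]
        rw [← Finset.sum_subset hsub hvanish]
        have hterm : ∀ n ∈ Finset.Icc 1 (s - m),
            μ (f n) = ENNReal.ofReal (ρ * (1 - ρ) ^ (n - 1)
              * (((s - n - 1).choose (m - 1) : ℝ) * ρ ^ m * (1 - ρ) ^ (s - n - m))) := by
          intro n hn
          simp only [Finset.mem_Icc] at hn
          rw [hfn n hn.1 (by omega), ih (s - n) htne, if_pos (by omega),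
            ← ENNReal.ofReal_mul (mul_nonneg hρ0.le (pow_nonneg hr0 _))]
        rw [Finset.sum_congr rfl hterm, ← ENNReal.ofReal_sum_of_nonneg (fun n _ => hnn n),
          real_conv m s hm hcase, Nat.add_sub_cancel]

/-- The Bernoulli race yields an unbiased estimator of the average weight:
`E[((1/N) ∑ c k) · (N-1)/(∑ C k - 1)] = (1/N) ∑ c k * b k`. -/
theorem bernoulli_race_likelihood_unbiased {Ω : Type*} [MeasurableSpace Ω]
    (μ : Measure Ω) [IsProbabilityMeasure μ]
    (N : ℕ) (hN : 2 ≤ N) (c b : Fin N → ℝ)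
    (hc : ∀ i, 0 < c i) (hb : ∀ i, b i ∈ Set.Ioc (0:ℝ) 1)
    (ρ : ℝ) (hρ : ρ = (∑ k, c k * b k) / ∑ k, c k)
    -- the output indices of the Bernoulli race
    (I : Fin N → Ω → Fin N) (hIm : ∀ k, Measurable (I k))
    (hIdist : ∀ k i, μ {ω | I k ω = i}
      = ENNReal.ofReal (c i * b i / ∑ j, c j * b j))
    -- the i.i.d. geometric iteration counts with success probability ρ
    (C : Fin N → Ω → ℕ) (hmeas : ∀ k, Measurable (C k))
    (hindep : iIndepFun C μ)
    (hgeom : ∀ k, ∀ n : ℕ, 1 ≤ n →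
      μ {ω | C k ω = n} = ENNReal.ofReal (ρ * (1 - ρ) ^ (n - 1))) :
    ∫ ω, ((1 / (N : ℝ)) * ∑ k, c k) * (((N : ℝ) - 1) / ((∑ k, (C k ω : ℝ)) - 1)) ∂μ
      = (1 / (N : ℝ)) * ∑ k, c k * b k := by
  classical
  have hNpos : (0:ℝ) < N := by positivity
  haveI : NeZero N := ⟨by omega⟩
  have hcpos : (0:ℝ) < ∑ k, c k :=
    Finset.sum_pos (fun i _ => hc i) Finset.univ_nonempty
  have hcbpos : (0:ℝ) < ∑ k, c k * b k :=
    Finset.sum_pos (fun i _ => mul_pos (hc i) (hb i).1) Finset.univ_nonempty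
  have hρ0 : 0 < ρ := hρ ▸ div_pos hcbpos hcpos
  have hρ1 : ρ ≤ 1 := by
    rw [hρ, div_le_one hcpos]
    exact Finset.sum_le_sum fun i _ => by
      nlinarith [(hb i).2, (hc i).le, hc i]
  have hr0 : (0:ℝ) ≤ 1 - ρ := by linarith
  set A : ℝ := (1 / (N : ℝ)) * ∑ k, c k with hA_def
  set T : Ω → ℕ := fun ω => ∑ k, C k ω with hT_def
  have hT : Measurable T := Finset.measurable_sum _ (fun k _ => hmeas k)
  have hcard : (Finset.univ : Finset (Fin N)).card = N := by simp
  have hTdist : ∀ s : ℕ, μ {ω | T ω = s} =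
      if N ≤ s then
        ENNReal.ofReal (((s - 1).choose (N - 1) : ℝ) * ρ ^ N * (1 - ρ) ^ (s - N))
      else 0 := by
    intro s
    have := negbinom_dist μ hρ0 hρ1 C hmeas hindep hgeom Finset.univ s Finset.univ_nonempty
    rwa [hcard] at this
  set h : ℕ → ℝ := fun n => A * (((N : ℝ) - 1) / ((n : ℝ) - 1)) with hh_def
  have hint_eq : ∀ ω, A * (((N : ℝ) - 1) / ((∑ k, (C k ω : ℝ)) - 1)) = h (T ω) := by
    intro ω
    simp only [hh_def, hT_def]
    push_cast
    ring_nf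
  have hmh : Measurable h := measurable_from_nat
  -- bound for integrability
  have hbound : ∀ n : ℕ, ‖h n‖ ≤ |A| * ((N:ℝ) - 1) := by
    intro n
    have hN1 : (0:ℝ) ≤ (N:ℝ) - 1 := by
      have : (1:ℝ) ≤ N := by exact_mod_cast Nat.one_le_of_lt hN
      linarith
    rw [hh_def]
    simp only [norm_mul, Real.norm_eq_abs]
    apply mul_le_mul_of_nonneg_left _ (abs_nonneg A)
    rw [abs_div, abs_of_nonneg hN1]
    rcases Nat.lt_or_ge n 1 with h0 | h1
    · interval_cases n
      simp
    rcases Nat.lt_or_ge n 2 with h1' | h2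
    · interval_cases n
      simp [hN1]
    · have hd : (1:ℝ) ≤ |(n:ℝ) - 1| := by
        rw [abs_of_nonneg (by
          have : (1:ℝ) ≤ (n:ℝ) := by exact_mod_cast Nat.one_le_of_lt h2
          linarith)]
        have : (2:ℝ) ≤ (n:ℝ) := by exact_mod_cast h2
        linarith
      exact div_le_self hN1 hd
  haveI : IsProbabilityMeasure (μ.map T) := Measure.isProbabilityMeasure_map hT.aemeasurable
  have hintg : Integrable h (μ.map T) := by
    apply Integrable.mono' (integrable_const (|A| * ((N:ℝ) - 1)))
      hmh.aestronglyMeasurable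
    exact Filter.Eventually.of_forall hbound
  have step1 : ∫ ω, A * (((N : ℝ) - 1) / ((∑ k, (C k ω : ℝ)) - 1)) ∂μ
      = ∫ n, h n ∂(μ.map T) := by
    rw [integral_map hT.aemeasurable hmh.aestronglyMeasurable]
    exact integral_congr_ae (Filter.Eventually.of_forall hint_eq)
  have hmap : ∀ n : ℕ, μ.map T {n} = μ {ω | T ω = n} := by
    intro n
    rw [Measure.map_apply hT (measurableSet_singleton n)]
    congr 1
  have step2 : ∫ n, h n ∂(μ.map T) = ∑' n, (μ {ω | T ω = n}).toReal • h n := by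
    rw [integral_countable' hintg]
    exact tsum_congr fun n => by rw [measureReal_def, hmap]
  set a : ℕ → ℝ := fun n => (μ {ω | T ω = n}).toReal • h n with ha_def
  -- terms below N vanish
  have hvanish : ∀ n, n < N → a n = 0 := by
    intro n hn
    have hz := hTdist n
    rw [if_neg (by omega : ¬ N ≤ n)] at hz
    simp [ha_def, hz]
  -- HasSum of shifted terms
  have hρne : ρ ≠ 0 := ne_of_gt hρ0
  have hN1 : (0:ℝ) ≤ (N:ℝ) - 1 := by
    have : (1:ℝ) ≤ N := by exact_mod_cast Nat.one_le_of_lt hN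
    linarith
  have hnorm : ‖1 - ρ‖ < 1 := by
    rw [Real.norm_eq_abs, abs_of_nonneg hr0]; linarith
  have hgs : HasSum (fun j : ℕ => ((j + (N - 2)).choose (N - 2) : ℝ) * (1 - ρ) ^ j)
      (1 / ρ ^ (N - 1)) := by
    have := hasSum_choose_mul_geometric_of_norm_lt_one (𝕜 := ℝ) (N - 2) hnorm
    have he : 1 - (1 - ρ) = ρ := by ring
    rw [he] at this
    have he2 : N - 2 + 1 = N - 1 := by omega
    rwa [he2] at this
  have hterm : ∀ j : ℕ, a (j + N)
      = (A * ρ ^ N) * (((j + (N - 2)).choose (N - 2) : ℝ) * (1 - ρ) ^ j) := by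
    intro j
    have hkey : ((j + N - 1).choose (N - 1) : ℝ) * ((N:ℝ) - 1)
        = ((j + N - 2).choose (N - 2) : ℝ) * ((j:ℝ) + (N:ℝ) - 1) := by
      have hnat := Nat.add_one_mul_choose_eq (j + N - 2) (N - 2)
      have h1 : j + N - 2 + 1 = j + N - 1 := by omega
      have h2 : N - 2 + 1 = N - 1 := by omega
      rw [h1, h2] at hnat
      -- hnat : (j + N - 1) * (j + N - 2).choose (N - 2) = (j + N - 1).choose (N - 1) * (N - 1)
      have := congrArg (fun x : ℕ => (x : ℝ)) hnat
      push_cast at this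
      have hc1 : ((j + N - 1 : ℕ) : ℝ) = (j:ℝ) + (N:ℝ) - 1 := by
        push_cast [Nat.cast_sub (by omega : 1 ≤ j + N)]; ring
      have hc2 : ((N - 1 : ℕ) : ℝ) = (N:ℝ) - 1 := by
        push_cast [Nat.cast_sub (by omega : 1 ≤ N)]; ring
      rw [hc1, hc2] at this
      linarith [this]
    have hd0 : (j:ℝ) + (N:ℝ) - 1 ≠ 0 := by
      have : (2:ℝ) ≤ (N:ℝ) := by exact_mod_cast hN
      have : (0:ℝ) ≤ (j:ℝ) := Nat.cast_nonneg j
      nlinarith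
    have hmass : μ {ω | T ω = j + N}
        = ENNReal.ofReal (((j + N - 1).choose (N - 1) : ℝ) * ρ ^ N * (1 - ρ) ^ j) := by
      rw [hTdist (j + N), if_pos (by omega), Nat.add_sub_cancel]
    have hnn : (0:ℝ) ≤ ((j + N - 1).choose (N - 1) : ℝ) * ρ ^ N * (1 - ρ) ^ j :=
      mul_nonneg (mul_nonneg (Nat.cast_nonneg _) (pow_nonneg hρ0.le _)) (pow_nonneg hr0 _)
    have hcast : ((j + N : ℕ) : ℝ) - 1 = (j:ℝ) + (N:ℝ) - 1 := by push_cast; ring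
    have hchoose_eq : ((j + (N - 2)).choose (N - 2) : ℝ) = ((j + N - 2).choose (N - 2) : ℝ) := by
      congr 2
      omega
    simp only [ha_def, hmass, ENNReal.toReal_ofReal hnn, smul_eq_mul, hh_def, hcast]
    rw [hchoose_eq]
    have hkey' : ((j + N - 1).choose (N - 1) : ℝ) * (((N:ℝ) - 1) / ((j:ℝ) + (N:ℝ) - 1))
        = ((j + N - 2).choose (N - 2) : ℝ) := by
      rw [← mul_div_assoc, hkey, mul_div_assoc, div_self hd0, mul_one]
    linear_combination (A * ρ ^ N * (1 - ρ) ^ j) * hkey'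
  have hval : A * ρ ^ N * (1 / ρ ^ (N - 1)) = A * ρ := by
    have hpow : ρ ^ N = ρ ^ (N - 1) * ρ := by
      rw [← pow_succ]
      congr 1
      omega
    rw [hpow]
    have hne : ρ ^ (N - 1) ≠ 0 := pow_ne_zero _ hρne
    field_simp
  have hshift : HasSum (fun j => a (j + N)) (A * ρ) := by
    have hs := hgs.mul_left (A * ρ ^ N)
    rw [hval] at hs
    exact hs.congr_fun fun j => (hterm j).symm ▸ rfl
  have hfull : HasSum a (A * ρ) := by
    have h0 : ∑ i ∈ Finset.range N, a i = 0 :=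
      Finset.sum_eq_zero fun i hi => hvanish i (Finset.mem_range.mp hi)
    have := (hasSum_nat_add_iff (f := a) N).mp hshift
    rwa [h0, add_zero] at this
  rw [step1, step2, hfull.tsum_eq, hA_def, hρ]
  field_simp
end
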